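/- Let f : ℝ → ℂ be a twice continuously differentiable function satisfying the harmonic-oscillator ground-state equation f''(t) = (t² − 1)·f(t) for all t ∈ ℝ, and assume f is square-integrable on ℝ (f ∈ L²(ℝ)). Then there exists a constant c ∈ ℂ such that f(t) = c·exp(−t²/2) for all t ∈ ℝ. In other words, the L²-kernel of the operator −d²/dt² + t² − 1 is one-dimensional, spanned by exp(−t²/2). -/

import Mathlib

open MeasureTheory Filter

private lemma exp_ge_aux (t : ℝ) : 2 * t - 1 ≤ Real.exp t := by
  have h : Real.exp t = Real.exp (t/2) * Real.exp (t/2) := by rw [← Real.exp_add]; ring_nf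
  nlinarith [Real.add_one_le_exp (t/2), Real.exp_pos (t/2), sq_nonneg (Real.exp (t/2) - 2)]

/-- The `L²`-kernel of the harmonic oscillator `-d²/dt² + t² - 1` is
one-dimensional, spanned by the Gaussian `exp(-t²/2)`: any `C²` square-integrable
solution of `f'' = (t² - 1) f` is a constant multiple of `exp(-t²/2)`. -/
theorem groundState_unique
    (f : ℝ → ℂ) (hf : ContDiff ℝ 2 f)
    (hode : ∀ t : ℝ, deriv (deriv f) t = ((t : ℂ) ^ 2 - 1) * f t)
    (hL2 : MemLp f 2 volume) :
    ∃ c : ℂ, ∀ t : ℝ, f t = c * Complex.exp (-(t : ℂ) ^ 2 / 2) := by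
  have hd1 : Differentiable ℝ f := hf.differentiable (by norm_num)
  have hd2 : Differentiable ℝ (deriv f) := by
    have h2 : ContDiff ℝ ((1 : ℕ∞) + 1) f := by exact_mod_cast hf
    exact (contDiff_succ_iff_deriv.mp h2).2.2.differentiable (by norm_num)
  have h1 : ∀ t : ℝ, HasDerivAt f (deriv f t) t := fun t => (hd1 t).hasDerivAt
  have h2 : ∀ t : ℝ, HasDerivAt (deriv f) (deriv (deriv f) t) t := fun t => (hd2 t).hasDerivAt
  have hoc : ∀ t : ℝ, HasDerivAt (fun s : ℝ => (s : ℂ)) 1 t := fun t =>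
    Complex.ofRealCLM.hasDerivAt
  have hsq : ∀ t : ℝ, HasDerivAt (fun s : ℝ => ((s : ℂ)) ^ 2) (2 * (t : ℂ)) t := by
    intro t
    simpa using (hasDerivAt_pow 2 (t : ℂ)).comp_ofReal
  set h : ℝ → ℂ := fun t => deriv f t + (t : ℂ) * f t with hdefh
  have hh : ∀ t : ℝ, HasDerivAt h ((t : ℂ) * h t) t := by
    intro t
    have := (h2 t).add ((hoc t).mul (h1 t))
    rw [hode t] at this
    refine this.congr_deriv (Eq.symm ?_)
    simp only [hdefh]
    ring
  -- exp derivative helpers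
  have hexpneg : ∀ t : ℝ, HasDerivAt (fun s : ℝ => Complex.exp (-(s : ℂ) ^ 2 / 2))
      (Complex.exp (-(t : ℂ) ^ 2 / 2) * (-(t : ℂ))) t := by
    intro t
    have h0 : HasDerivAt (fun s : ℝ => -(s : ℂ) ^ 2 / 2) (-(t : ℂ)) t := by
      have := ((hsq t).neg).div_const 2
      refine this.congr_deriv (Eq.symm ?_)
      ring
    exact h0.cexp
  have hexppos : ∀ t : ℝ, HasDerivAt (fun s : ℝ => Complex.exp ((s : ℂ) ^ 2 / 2))
      (Complex.exp ((t : ℂ) ^ 2 / 2) * (t : ℂ)) t := by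
    intro t
    have h0 : HasDerivAt (fun s : ℝ => (s : ℂ) ^ 2 / 2) ((t : ℂ)) t := by
      have := (hsq t).div_const 2
      refine this.congr_deriv (Eq.symm ?_)
      ring
    exact h0.cexp
  -- u = h * exp(-t²/2) is constant
  set u : ℝ → ℂ := fun t => h t * Complex.exp (-(t : ℂ) ^ 2 / 2) with hdefu
  have hu : ∀ t : ℝ, HasDerivAt u 0 t := by
    intro t
    have := (hh t).mul (hexpneg t)
    refine this.congr_deriv (Eq.symm ?_)
    ring
  have huconst : ∀ t : ℝ, u t = u 0 :=
    fun t => is_const_of_deriv_eq_zero (fun x => (hu x).differentiableAt)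
      (fun x => (hu x).deriv) t 0
  set a : ℂ := h 0 with hdefa
  have hu0 : u 0 = a := by simp [hdefu, hdefa]
  have hexpinv : ∀ t : ℝ, Complex.exp (-(t : ℂ) ^ 2 / 2) * Complex.exp ((t : ℂ) ^ 2 / 2) = 1 := by
    intro t
    rw [← Complex.exp_add, show (-(t : ℂ) ^ 2 / 2 + (t : ℂ) ^ 2 / 2) = 0 by ring,
      Complex.exp_zero]
  have ha : ∀ t : ℝ, h t = a * Complex.exp ((t : ℂ) ^ 2 / 2) := by
    intro t
    have hc := (huconst t).trans hu0
    simp only [hdefu] at hc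
    linear_combination Complex.exp ((t : ℂ) ^ 2 / 2) * hc - h t * (hexpinv t)
  -- w = f * exp(t²/2), w' = a * exp(t²)
  set w : ℝ → ℂ := fun t => f t * Complex.exp ((t : ℂ) ^ 2 / 2) with hdefw
  have hexpsq : ∀ t : ℝ, Complex.exp ((t : ℂ) ^ 2 / 2) * Complex.exp ((t : ℂ) ^ 2 / 2)
      = Complex.exp ((t : ℂ) ^ 2) := by
    intro t
    rw [← Complex.exp_add, show ((t : ℂ) ^ 2 / 2 + (t : ℂ) ^ 2 / 2) = (t : ℂ) ^ 2 by ring]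
  have hw : ∀ t : ℝ, HasDerivAt w (a * Complex.exp ((t : ℂ) ^ 2)) t := by
    intro t
    have hmul := (h1 t).mul (hexppos t)
    refine hmul.congr_deriv (Eq.symm ?_)
    have hht := ha t
    simp only [hdefh] at hht
    linear_combination (-Complex.exp ((t : ℂ) ^ 2 / 2)) * hht - a * (hexpsq t)
  by_cases haz : a = 0
  · -- f = f 0 * exp(-t²/2)
    refine ⟨f 0, fun t => ?_⟩
    have hw0 : ∀ s : ℝ, HasDerivAt w 0 s := by
      intro s; simpa [haz] using hw s
    have hconst : w t = w 0 :=
      is_const_of_deriv_eq_zero (fun x => (hw0 x).differentiableAt)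
        (fun x => (hw0 x).deriv) t 0
    have hw00 : w 0 = f 0 := by simp [hdefw]
    rw [hw00] at hconst
    simp only [hdefw] at hconst
    linear_combination Complex.exp (-(t : ℂ) ^ 2 / 2) * hconst - f t * (hexpinv t)
  · exfalso
    -- p = Re(conj a * w), p' = ‖a‖² exp(t²)
    set p : ℝ → ℝ := fun t => ((starRingEnd ℂ) a * w t).re with hdefp
    have hp : ∀ t : ℝ, HasDerivAt p (Complex.normSq a * Real.exp (t ^ 2)) t := by
      intro t
      have hm : HasDerivAt (fun s => (starRingEnd ℂ) a * w s)
          ((starRingEnd ℂ) a * (a * Complex.exp ((t : ℂ) ^ 2))) t := (hw t).const_mul _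
      have hcomp := Complex.reCLM.hasFDerivAt.comp_hasDerivAt t hm
      refine hcomp.congr_deriv (Eq.symm ?_)
      have hre : (starRingEnd ℂ) a * (a * Complex.exp ((t : ℂ) ^ 2))
          = ((Complex.normSq a * Real.exp (t ^ 2) : ℝ) : ℂ) := by
        rw [← mul_assoc, ← Complex.normSq_eq_conj_mul_self]
        push_cast [Complex.ofReal_exp]
        ring
      rw [hre]
      simp only [Complex.reCLM_apply, Complex.ofReal_re]
    -- q = p - ‖a‖² exp(t² - t) is monotone
    set q : ℝ → ℝ := fun t => p t - Complex.normSq a * Real.exp (t ^ 2 - t) with hdefq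
    have hq : ∀ t : ℝ, HasDerivAt q
        (Complex.normSq a * Real.exp (t ^ 2)
          - Complex.normSq a * (Real.exp (t ^ 2 - t) * (2 * t - 1))) t := by
      intro t
      have hr : HasDerivAt (fun s : ℝ => s ^ 2 - s) (2 * t - 1) t := by
        have := (hasDerivAt_pow 2 t).sub (hasDerivAt_id t)
        refine this.congr_deriv (Eq.symm ?_)
        ring
      exact (hp t).sub ((hr.exp).const_mul _)
    have hqmono : Monotone q := by
      apply monotone_of_deriv_nonneg (fun x => (hq x).differentiableAt)
      intro t
      rw [(hq t).deriv]
      have hE : Real.exp (t ^ 2) = Real.exp (t ^ 2 - t) * Real.exp t := by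
        rw [← Real.exp_add]; ring_nf
      rw [hE]
      nlinarith [mul_nonneg (mul_nonneg (Complex.normSq_nonneg a)
        (Real.exp_pos (t ^ 2 - t)).le) (sub_nonneg.mpr (exp_ge_aux t))]
    have hanorm : 0 < ‖a‖ := norm_pos_iff.mpr haz
    -- lower bound for ‖f t‖ on t ≥ 0
    have hlow : ∀ t : ℝ, 0 ≤ t →
        ‖a‖ * Real.exp (t ^ 2 / 2 - t) + (q 0 / ‖a‖) * Real.exp (-(t ^ 2 / 2)) ≤ ‖f t‖ := by
      intro t ht
      have hq0 : q 0 ≤ q t := hqmono ht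
      have hpt : Complex.normSq a * Real.exp (t ^ 2 - t) + q 0 ≤ p t := by
        have hqt : q t = p t - Complex.normSq a * Real.exp (t ^ 2 - t) := rfl
        have hq00 : q 0 ≤ q t := hq0
        linarith [hq00, hqt.le, hqt.ge]
      have hple : p t ≤ ‖a‖ * ‖w t‖ := by
        calc p t ≤ ‖(starRingEnd ℂ) a * w t‖ := Complex.re_le_norm _
          _ = ‖a‖ * ‖w t‖ := by
              rw [norm_mul, Complex.norm_conj]
      have hwnorm : ‖w t‖ = ‖f t‖ * Real.exp (t ^ 2 / 2) := by
        simp only [hdefw]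
        rw [norm_mul]
        congr 1
        rw [show ((t : ℂ) ^ 2 / 2) = ((t ^ 2 / 2 : ℝ) : ℂ) by push_cast; ring,
          ← Complex.ofReal_exp, Complex.norm_real, Real.norm_eq_abs,
          abs_of_pos (Real.exp_pos _)]
      rw [hwnorm] at hple
      have hkey : Complex.normSq a * Real.exp (t ^ 2 - t) + q 0
          ≤ ‖f t‖ * (‖a‖ * Real.exp (t ^ 2 / 2)) := by
        calc Complex.normSq a * Real.exp (t ^ 2 - t) + q 0 ≤ p t := hpt
          _ ≤ ‖a‖ * (‖f t‖ * Real.exp (t ^ 2 / 2)) := hple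
          _ = ‖f t‖ * (‖a‖ * Real.exp (t ^ 2 / 2)) := by ring
      have hns : Complex.normSq a = ‖a‖ ^ 2 := by
        rw [Complex.normSq_eq_norm_sq]
      have hepos : (0 : ℝ) < Real.exp (t ^ 2 / 2) := Real.exp_pos _
      have hprod : (‖a‖ * Real.exp (t ^ 2 / 2 - t) + (q 0 / ‖a‖) * Real.exp (-(t ^ 2 / 2)))
          * (‖a‖ * Real.exp (t ^ 2 / 2))
          = Complex.normSq a * Real.exp (t ^ 2 - t) + q 0 := by
        have e1 : Real.exp (t ^ 2 / 2 - t) * Real.exp (t ^ 2 / 2) = Real.exp (t ^ 2 - t) := by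
          rw [← Real.exp_add, show (t ^ 2 / 2 - t + t ^ 2 / 2 : ℝ) = t ^ 2 - t by ring]
        have e2 : Real.exp (-(t ^ 2 / 2)) * Real.exp (t ^ 2 / 2) = 1 := by
          rw [← Real.exp_add, show (-(t ^ 2 / 2) + t ^ 2 / 2 : ℝ) = 0 by ring, Real.exp_zero]
        have e3 : q 0 / ‖a‖ * ‖a‖ = q 0 := div_mul_cancel₀ _ (ne_of_gt hanorm)
        rw [hns]
        calc (‖a‖ * Real.exp (t ^ 2 / 2 - t) + q 0 / ‖a‖ * Real.exp (-(t ^ 2 / 2)))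
            * (‖a‖ * Real.exp (t ^ 2 / 2))
            = ‖a‖ ^ 2 * (Real.exp (t ^ 2 / 2 - t) * Real.exp (t ^ 2 / 2))
              + (q 0 / ‖a‖ * ‖a‖) * (Real.exp (-(t ^ 2 / 2)) * Real.exp (t ^ 2 / 2)) := by ring
          _ = ‖a‖ ^ 2 * Real.exp (t ^ 2 - t) + q 0 := by rw [e1, e2, e3]; ring
      have hmulpos : 0 < ‖a‖ * Real.exp (t ^ 2 / 2) := mul_pos hanorm hepos
      have hfin : (‖a‖ * Real.exp (t ^ 2 / 2 - t) + q 0 / ‖a‖ * Real.exp (-(t ^ 2 / 2)))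
          * (‖a‖ * Real.exp (t ^ 2 / 2)) ≤ ‖f t‖ * (‖a‖ * Real.exp (t ^ 2 / 2)) := by
        rw [hprod]; exact hkey
      exact le_of_mul_le_mul_right hfin hmulpos
    -- ‖f ·‖ → ∞
    have htend1 : Tendsto (fun t : ℝ => t ^ 2 / 2 - t) atTop atTop := by
      have heq : (fun t : ℝ => t ^ 2 / 2 - t) = fun t => ((t + -1) ^ 2) / 2 + (-1/2 : ℝ) := by
        funext t; ring
      rw [heq]
      apply tendsto_atTop_add_const_right
      apply Tendsto.atTop_div_const (by norm_num : (0:ℝ) < 2)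
      exact (tendsto_pow_atTop two_ne_zero).comp
        (tendsto_atTop_add_const_right _ (-1) tendsto_id)
    have htend2 : Tendsto (fun t : ℝ => t ^ 2 / 2) atTop atTop :=
      (tendsto_pow_atTop two_ne_zero).atTop_div_const (by norm_num)
    have htendL : Tendsto (fun t : ℝ => ‖a‖ * Real.exp (t ^ 2 / 2 - t)
        + (q 0 / ‖a‖) * Real.exp (-(t ^ 2 / 2))) atTop atTop := by
      have hA : Tendsto (fun t : ℝ => ‖a‖ * Real.exp (t ^ 2 / 2 - t)) atTop atTop :=
        Tendsto.const_mul_atTop hanorm (Real.tendsto_exp_atTop.comp htend1)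
      have hB : Tendsto (fun t : ℝ => (q 0 / ‖a‖) * Real.exp (-(t ^ 2 / 2))) atTop
          (nhds ((q 0 / ‖a‖) * 0)) :=
        Tendsto.const_mul _ (Real.tendsto_exp_atBot.comp (tendsto_neg_atTop_atBot.comp htend2))
      exact hA.atTop_add hB
    have hftend : Tendsto (fun t : ℝ => ‖f t‖) atTop atTop := by
      apply tendsto_atTop_mono' atTop ?_ htendL
      filter_upwards [eventually_ge_atTop (0:ℝ)] with t ht
      exact hlow t ht
    obtain ⟨T, hT⟩ := eventually_atTop.mp (hftend.eventually_ge_atTop 1)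
    have hint : Integrable (fun t => ‖f t‖ ^ 2) volume :=
      (memLp_two_iff_integrable_sq_norm hf.continuous.aestronglyMeasurable).mp hL2
    have h1' : IntegrableOn (fun t => ‖f t‖ ^ 2) (Set.Ici T) volume := hint.integrableOn
    have h2' : IntegrableOn (fun _ : ℝ => (1 : ℝ)) (Set.Ici T) volume := by
      apply h1'.mono' aestronglyMeasurable_const
      filter_upwards [ae_restrict_mem measurableSet_Ici] with x hx
      have h3 := hT x hx
      rw [norm_one]
      nlinarith [norm_nonneg (f x)]
    have hcontr := integrable_const_iff.mp h2'
    simp [isFiniteMeasure_restrict, Real.volume_Ici] at hcontr
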